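/- Let (V,d) be a finite metric space, k a positive integer, and opt_k = min{ Σ_{v∈V} d(v,U) : U ⊆ V, |U| = k }, where d(v,U) = min_{u∈U} d(v,u). Let C ⊆ V with |C| ≥ k and let M : V → C satisfy Σ_{v∈V} d(v, M(v)) ≤ α·opt_k for some real α ≥ 0. Define weights w(c) = |{v ∈ V : M(v) = c}| for c ∈ C. Then for every real β ≥ 1 and every A ⊆ C with |A| = k satisfying Σ_{c∈C} w(c)·d(c,A) ≤ β · min{ Σ_{c∈C} w(c)·d(c,U) : U ⊆ C, |U| = k }, it holds that Σ_{v∈V} d(v,A) ≤ (α + 2β(α+1)) · opt_k. -/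

import Mathlib

open Finset

private lemma infd_le {V : Type*} [MetricSpace V] (v : V) (U : Finset V) {u : V}
    (hu : u ∈ U) : sInf (dist v '' ↑U) ≤ dist v u :=
  csInf_le ((U.finite_toSet.image _).bddBelow) ⟨u, hu, rfl⟩

private lemma infd_attained {V : Type*} [MetricSpace V] (v : V) {U : Finset V}
    (hU : U.Nonempty) : ∃ u ∈ U, sInf (dist v '' ↑U) = dist v u := by
  obtain ⟨u0, hu0⟩ := hU
  have hne : (dist v '' ↑U).Nonempty := ⟨dist v u0, u0, hu0, rfl⟩
  obtain ⟨u, hu, h⟩ := hne.csInf_mem (U.finite_toSet.image _)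
  exact ⟨u, hu, h.symm⟩

private lemma infd_nonneg {V : Type*} [MetricSpace V] (v : V) (U : Finset V) :
    0 ≤ sInf (dist v '' ↑U) :=
  Real.sInf_nonneg (by rintro x ⟨u, _, rfl⟩; exact dist_nonneg)

private lemma infd_tri {V : Type*} [MetricSpace V] (v w : V) {U : Finset V}
    (hU : U.Nonempty) : sInf (dist v '' ↑U) ≤ dist v w + sInf (dist w '' ↑U) := by
  obtain ⟨u, hu, h⟩ := infd_attained w hU
  rw [h]
  exact (infd_le v U hu).trans (dist_triangle v w u)

private lemma fiber_sum {V : Type*} [Fintype V] [DecidableEq V] (M : V → V)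
    (C : Finset V) (hM : ∀ v, M v ∈ C) (f : V → ℝ) :
    ∑ c ∈ C, ((Finset.univ.filter (fun v => M v = c)).card : ℝ) * f c
      = ∑ v : V, f (M v) := by
  rw [← Finset.sum_fiberwise_of_maps_to' (t := C) (fun v _ => hM v) f]
  refine Finset.sum_congr rfl fun c _ => ?_
  rw [Finset.sum_const, nsmul_eq_mul]

theorem stmt14 {V : Type*} [MetricSpace V] [Fintype V] [DecidableEq V]
    (k : ℕ) (hk : 0 < k) (hkcard : k ≤ Fintype.card V)
    (C : Finset V) (hCk : k ≤ C.card)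
    (Mmap : V → V) (hM : ∀ v, Mmap v ∈ C)
    (α : ℝ) (hα : 0 ≤ α)
    (hcost : ∑ v : V, dist v (Mmap v) ≤
      α * sInf {x : ℝ | ∃ U : Finset V, U.card = k ∧
                  x = ∑ v : V, sInf (dist v '' ↑U)})
    (β : ℝ) (hβ : 1 ≤ β)
    (A : Finset V) (hA : A ⊆ C) (hAk : A.card = k)
    (hAapprox : ∀ U : Finset V, U ⊆ C → U.card = k →
      ∑ c ∈ C, ((Finset.univ.filter (fun v => Mmap v = c)).card : ℝ) *
          sInf (dist c '' ↑A) ≤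
        β * ∑ c ∈ C, ((Finset.univ.filter (fun v => Mmap v = c)).card : ℝ) *
          sInf (dist c '' ↑U)) :
    ∑ v : V, sInf (dist v '' ↑A) ≤
      (α + 2 * β * (α + 1)) *
        sInf {x : ℝ | ∃ U : Finset V, U.card = k ∧
              x = ∑ v : V, sInf (dist v '' ↑U)} := by
  set S : Set ℝ := {x : ℝ | ∃ U : Finset V, U.card = k ∧
      x = ∑ v : V, sInf (dist v '' ↑U)} with hS
  set opt : ℝ := sInf S with hopt
  -- S is finite and nonempty, so opt is attained
  have hSfin : S.Finite := by
    apply (Set.finite_range (fun U : Finset V => ∑ v : V, sInf (dist v '' ↑U))).subset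
    rintro x ⟨U, _, rfl⟩; exact ⟨U, rfl⟩
  have hSne : S.Nonempty := by
    obtain ⟨U, _, hUcard⟩ := Finset.exists_subset_card_eq (s := Finset.univ) (n := k) (by simpa using hkcard)
    exact ⟨_, U, hUcard, rfl⟩
  obtain ⟨Uopt, hUoptk, hUopteq⟩ : opt ∈ S := hSne.csInf_mem hSfin
  have hUoptne : Uopt.Nonempty := Finset.card_pos.mp (hUoptk ▸ hk)
  have hopt0 : 0 ≤ opt := by
    apply Real.sInf_nonneg
    rintro x ⟨U, _, rfl⟩
    exact Finset.sum_nonneg fun v _ => infd_nonneg v U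
  have hAne : A.Nonempty := Finset.card_pos.mp (hAk ▸ hk)
  have hCne : C.Nonempty := hAne.mono hA
  -- projection to C
  choose p hpC hpmin using fun u : V => C.exists_min_image (fun c => dist u c) hCne
  -- build U ⊆ C of card k containing the projected optimal centers
  have himg : Uopt.image p ⊆ C := by
    intro c hc; obtain ⟨u, _, rfl⟩ := Finset.mem_image.mp hc; exact hpC u
  obtain ⟨U, hUimg, hUC, hUk⟩ := Finset.exists_subsuperset_card_eq himg
    ((Finset.card_image_le).trans hUoptk.le) hCk
  have hUne : U.Nonempty := Finset.card_pos.mp (hUk ▸ hk)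
  -- key: for c ∈ C, d(c,U) ≤ 2 d(c,Uopt)
  have hkey : ∀ c ∈ C, sInf (dist c '' ↑U) ≤ 2 * sInf (dist c '' ↑Uopt) := by
    intro c hc
    obtain ⟨u, hu, hueq⟩ := infd_attained c hUoptne
    have hpu : p u ∈ U := hUimg (Finset.mem_image_of_mem p hu)
    calc sInf (dist c '' ↑U) ≤ dist c (p u) := infd_le c U hpu
      _ ≤ dist c u + dist u (p u) := dist_triangle c u (p u)
      _ ≤ dist c u + dist u c := by linarith [hpmin u c hc]
      _ = 2 * sInf (dist c '' ↑Uopt) := by rw [hueq, dist_comm u c]; ring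
  have hβ0 : (0:ℝ) ≤ β := le_trans zero_le_one hβ
  -- cost of U for the weighted instance
  have hU2 : ∑ c ∈ C, ((Finset.univ.filter (fun v => Mmap v = c)).card : ℝ) *
      sInf (dist c '' ↑U) ≤ 2 * (α + 1) * opt := by
    have h1 : ∑ c ∈ C, ((Finset.univ.filter (fun v => Mmap v = c)).card : ℝ) *
        sInf (dist c '' ↑U) ≤
        ∑ c ∈ C, ((Finset.univ.filter (fun v => Mmap v = c)).card : ℝ) *
        (2 * sInf (dist c '' ↑Uopt)) := by
      refine Finset.sum_le_sum fun c hc => ?_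
      exact mul_le_mul_of_nonneg_left (hkey c hc) (by positivity)
    have h2 : ∑ c ∈ C, ((Finset.univ.filter (fun v => Mmap v = c)).card : ℝ) *
        (2 * sInf (dist c '' ↑Uopt)) = 2 * ∑ v : V, sInf (dist (Mmap v) '' ↑Uopt) := by
      rw [← fiber_sum Mmap C hM (fun c => sInf (dist c '' ↑Uopt)), Finset.mul_sum]
      exact Finset.sum_congr rfl fun c _ => by ring
    have h3 : ∑ v : V, sInf (dist (Mmap v) '' ↑Uopt) ≤
        ∑ v : V, (dist v (Mmap v) + sInf (dist v '' ↑Uopt)) := by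
      refine Finset.sum_le_sum fun v _ => ?_
      have := infd_tri (Mmap v) v hUoptne
      rwa [dist_comm (Mmap v) v] at this
    rw [Finset.sum_add_distrib, ← hUopteq] at h3
    calc _ ≤ _ := h1
      _ = 2 * ∑ v : V, sInf (dist (Mmap v) '' ↑Uopt) := h2
      _ ≤ 2 * (α * opt + opt) := by linarith
      _ = 2 * (α + 1) * opt := by ring
  -- main chain
  have hmain : ∑ v : V, sInf (dist v '' ↑A) ≤
      ∑ v : V, dist v (Mmap v) + ∑ v : V, sInf (dist (Mmap v) '' ↑A) := by
    rw [← Finset.sum_add_distrib]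
    exact Finset.sum_le_sum fun v _ => infd_tri v (Mmap v) hAne
  have hw : ∑ v : V, sInf (dist (Mmap v) '' ↑A) =
      ∑ c ∈ C, ((Finset.univ.filter (fun v => Mmap v = c)).card : ℝ) *
        sInf (dist c '' ↑A) := (fiber_sum Mmap C hM (fun c => sInf (dist c '' ↑A))).symm
  have happ := hAapprox U hUC hUk
  have hfin : ∑ c ∈ C, ((Finset.univ.filter (fun v => Mmap v = c)).card : ℝ) *
      sInf (dist c '' ↑A) ≤ β * (2 * (α + 1) * opt) := by
    calc _ ≤ _ := happ
      _ ≤ β * (2 * (α + 1) * opt) := mul_le_mul_of_nonneg_left hU2 hβ0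
  calc ∑ v : V, sInf (dist v '' ↑A)
      ≤ ∑ v : V, dist v (Mmap v) + ∑ v : V, sInf (dist (Mmap v) '' ↑A) := hmain
    _ ≤ α * opt + β * (2 * (α + 1) * opt) := by rw [hw] at *; linarith
    _ = (α + 2 * β * (α + 1)) * opt := by ring
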